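/- Let N ≥ 1 and let a₁,…,a_N, b₁,…,b_N be real numbers, all strictly greater than −1, with S = ∑_{i=1}^N (a_i − b_i) > 0. Then there exists C > 0 such that for all real M ≥ 0 and all λ ∈ ℝ: |∏_{i=1}^N Γ(a_i + M + 1 + iλ) / Γ(b_i + M + 1 + iλ)| ≤ C (1 + M)^{S} (1 + λ²)^{S/2}. -/

import Mathlib

open Finset Filter Topology

namespace GammaShiftAux

noncomputable def g (y u : ℝ) : ℝ := Real.log (u^2 + y^2) - 2 * Real.log u

lemma g_eq (y : ℝ) {u : ℝ} (hu : 0 < u) : g y u = Real.log ((u^2 + y^2)/u^2) := by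
  rw [g, Real.log_div (by positivity) (by positivity), Real.log_pow]
  push_cast; ring

lemma g_eq' (y : ℝ) {u : ℝ} (hu : 0 < u) : g y u = Real.log (1 + y^2/u^2) := by
  rw [g_eq y hu]; congr 1; field_simp

lemma g_nonneg (y : ℝ) {u : ℝ} (hu : 0 < u) : 0 ≤ g y u := by
  rw [g_eq' y hu]
  exact Real.log_nonneg (le_add_of_nonneg_right (by positivity))

lemma g_anti (y : ℝ) {u v : ℝ} (hu : 0 < u) (huv : u ≤ v) : g y v ≤ g y u := by
  have hv : 0 < v := lt_of_lt_of_le hu huv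
  rw [g_eq' y hu, g_eq' y hv]
  have : y^2/v^2 ≤ y^2/u^2 := by
    apply div_le_div_of_nonneg_left (by positivity) (by positivity)
    exact pow_le_pow_left₀ hu.le huv 2
  exact Real.log_le_log (by positivity) (by linarith)

lemma exp_g (y : ℝ) {u : ℝ} (hu : 0 < u) : Real.exp (g y u) = (u^2 + y^2)/u^2 := by
  rw [g_eq y hu, Real.exp_log (by positivity)]

lemma gConvex (y : ℝ) : ConvexOn ℝ (Set.Ioi (0:ℝ)) (g y) := by
  have hint : interior (Set.Ioi (0:ℝ)) = Set.Ioi 0 := interior_Ioi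
  apply convexOn_of_hasDerivWithinAt2_nonneg (convex_Ioi (0:ℝ))
    (f' := fun u => 2*u/(u^2+y^2) - 2/u)
    (f'' := fun u => (2*(u^2+y^2) - 2*u*(2*u))/(u^2+y^2)^2 + 2/u^2)
  · -- continuity
    intro u hu
    have hu' : (0:ℝ) < u := hu
    apply ContinuousWithinAt.sub
    · exact ((Real.continuousAt_log (by positivity)).comp
        (by fun_prop)).continuousWithinAt
    · exact (continuous_const.continuousAt.mul
        (Real.continuousAt_log hu'.ne')).continuousWithinAt
  · intro u hu
    rw [hint] at hu
    have hu' : (0:ℝ) < u := hu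
    have h1 : HasDerivAt (fun u : ℝ => u^2 + y^2) (2*u) u := by
      simpa using (hasDerivAt_pow 2 u).add_const (y^2)
    have h2 : HasDerivAt (fun u : ℝ => Real.log (u^2+y^2)) (2*u/(u^2+y^2)) u :=
      h1.log (by positivity)
    have h3 : HasDerivAt (fun u : ℝ => 2 * Real.log u) (2/u) u := by
      have := (Real.hasDerivAt_log hu'.ne').const_mul 2
      simpa [mul_comm, div_eq_mul_inv] using this
    exact (h2.sub h3).hasDerivWithinAt
  · intro u hu
    rw [hint] at hu
    have hu' : (0:ℝ) < u := hu
    have h1 : HasDerivAt (fun u : ℝ => u^2 + y^2) (2*u) u := by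
      simpa using (hasDerivAt_pow 2 u).add_const (y^2)
    have h2 : HasDerivAt (fun u : ℝ => 2*u) 2 u := by
      simpa using (hasDerivAt_id u).const_mul 2
    have h4 : HasDerivAt (fun u : ℝ => 2*u/(u^2+y^2))
        ((2*(u^2+y^2) - 2*u*(2*u))/(u^2+y^2)^2) u := h2.div h1 (by positivity)
    have h5 : HasDerivAt (fun u : ℝ => 2/u) (-(2/u^2)) u := by
      have := (hasDerivAt_inv hu'.ne').const_mul 2
      simpa [div_eq_mul_inv, neg_mul, mul_comm] using this
    have h6 : HasDerivAt (fun u : ℝ => 2*u/(u^2+y^2) - 2/u)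
        ((2*(u^2+y^2) - 2*u*(2*u))/(u^2+y^2)^2 + 2/u^2) u := by
      have h7 := h4.sub h5; rw [sub_neg_eq_add] at h7; exact h7
    exact h6.hasDerivWithinAt
  · intro u hu
    rw [hint] at hu
    have hu' : (0:ℝ) < u := hu
    have key : (2*(u^2+y^2) - 2*u*(2*u))/(u^2+y^2)^2 + 2/u^2
        = 2*y^2*(3*u^2+y^2)/(u^2*(u^2+y^2)^2) := by
      field_simp
      ring
    rw [key]
    positivity

lemma g_slope (y : ℝ) {p q r : ℝ} (hp : 0 < p) (hpq : p < q) (hqr : q < r) :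
    (g y q - g y p)/(q-p) ≤ (g y r - g y q)/(r-q) :=
  (gConvex y).slope_mono_adjacent (Set.mem_Ioi.2 hp)
    (Set.mem_Ioi.2 (hp.trans (hpq.trans hqr))) hpq hqr


lemma sum_upper (y t x : ℝ) (ht : 0 < t) (ht1 : t ≤ 1) (hx : 1 ≤ x) (n : ℕ) :
    ∑ j ∈ Finset.range (n+1), (g y (x + j) - g y (x + t + j))
      ≤ t * (2 * Real.log 4 + g y x) := by
  have hx0 : (0:ℝ) < x := by linarith
  rw [Finset.sum_range_succ']
  push_cast [add_zero]
  -- first term (j = 0)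
  have h0 : g y x - g y (x + t) ≤ t * (2 * Real.log 4) := by
    have hs := g_slope y (p := x/2) (q := x) (r := x + t) (by positivity)
      (by linarith) (by linarith)
    have e1 : x - x/2 = x/2 := by ring
    have e2 : x + t - x = t := by ring
    rw [e1, e2] at hs
    have h12 : g y (x/2) - g y x ≤ Real.log 4 := by
      rw [g_eq' y (by positivity : (0:ℝ) < x/2), g_eq' y hx0,
        ← Real.log_div (by positivity) (by positivity)]
      have e3 : y^2/(x/2)^2 = 4*(y^2/x^2) := by field_simp; ring
      rw [e3]
      have hY : (0:ℝ) ≤ y^2/x^2 := by positivity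
      apply Real.log_le_log (by positivity)
      rw [div_le_iff₀ (by positivity)]
      linarith
    have hgm : 0 ≤ g y (x/2) - g y x := by
      have := g_anti y (by positivity : (0:ℝ) < x/2) (by linarith : x/2 ≤ x)
      linarith
    have key : g y x - g y (x + t) ≤ 2 * t * (g y (x/2) - g y x) := by
      rw [div_le_div_iff₀ (by positivity) ht] at hs
      nlinarith [mul_le_mul_of_nonneg_left (by linarith : (1:ℝ) ≤ x) hgm,
        mul_pos ht hx0]
    have h2 := mul_le_mul_of_nonneg_left h12 (by positivity : (0:ℝ) ≤ 2*t)
    linarith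
  -- tail terms
  have htail : ∑ i ∈ Finset.range n, (g y (x + ((i:ℝ) + 1)) - g y (x + t + ((i:ℝ) + 1)))
      ≤ t * (g y x - g y (x + n)) := by
    have hterm : ∀ i ∈ Finset.range n,
        g y (x + ((i:ℝ) + 1)) - g y (x + t + ((i:ℝ) + 1))
          ≤ t * (g y (x + i) - g y (x + ((i:ℝ) + 1))) := by
      intro i _
      have hi : (0:ℝ) ≤ (i:ℝ) := Nat.cast_nonneg i
      have hs := g_slope y (p := x + i) (q := x + i + 1) (r := x + i + 1 + t)
        (by linarith) (by linarith) (by linarith)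
      have e1 : x + (i:ℝ) + 1 - (x + i) = 1 := by ring
      have e2 : x + (i:ℝ) + 1 + t - (x + i + 1) = t := by ring
      rw [e1, e2] at hs
      rw [le_div_iff₀ ht] at hs
      have e3 : x + ((i:ℝ) + 1) = x + i + 1 := by ring
      have e4 : x + t + ((i:ℝ) + 1) = x + i + 1 + t := by ring
      rw [e3, e4]
      nlinarith
    calc ∑ i ∈ Finset.range n, (g y (x + ((i:ℝ) + 1)) - g y (x + t + ((i:ℝ) + 1)))
        ≤ ∑ i ∈ Finset.range n, t * (g y (x + i) - g y (x + ((i:ℝ) + 1))) :=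
          Finset.sum_le_sum hterm
      _ = t * ∑ i ∈ Finset.range n, ((fun k : ℕ => g y (x + k)) i
            - (fun k : ℕ => g y (x + k)) (i + 1)) := by
          rw [Finset.mul_sum]
          apply Finset.sum_congr rfl
          intro i _
          push_cast
          ring_nf
      _ = t * (g y (x + (0:ℕ)) - g y (x + n)) := by rw [Finset.sum_range_sub']
      _ = t * (g y x - g y (x + n)) := by norm_num
  have hgn : 0 ≤ g y (x + n) := g_nonneg y (by positivity)
  nlinarith [h0, htail, mul_nonneg ht.le hgn]

lemma sum_lower (y t x : ℝ) (ht : 0 < t) (ht1 : t ≤ 1) (hx : 1 ≤ x) (n : ℕ) :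
    t * (g y (x + t) - g y (x + t + (n+1:ℕ)))
      ≤ ∑ j ∈ Finset.range (n+1), (g y (x + j) - g y (x + t + j)) := by
  have hx0 : (0:ℝ) < x := by linarith
  have hterm : ∀ j ∈ Finset.range (n+1),
      t * ((fun k : ℕ => g y (x + t + k)) j - (fun k : ℕ => g y (x + t + k)) (j+1))
        ≤ g y (x + j) - g y (x + t + j) := by
    intro j _
    have hj : (0:ℝ) ≤ (j:ℝ) := Nat.cast_nonneg j
    have hs := g_slope y (p := x + j) (q := x + j + t) (r := x + j + t + 1)
      (by linarith) (by linarith) (by linarith)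
    have e1 : x + (j:ℝ) + t - (x + j) = t := by ring
    have e2 : x + (j:ℝ) + t + 1 - (x + j + t) = 1 := by ring
    rw [e1, e2, div_one, div_le_iff₀ ht] at hs
    have e3 : x + t + (j:ℝ) = x + j + t := by ring
    have e4 : x + t + ((j:ℝ) + 1) = x + j + t + 1 := by ring
    simp only []
    push_cast
    rw [e3, e4]
    nlinarith
  calc t * (g y (x + t) - g y (x + t + (n+1:ℕ)))
      = t * ((fun k : ℕ => g y (x + t + k)) 0 - (fun k : ℕ => g y (x + t + k)) (n+1)) := by
        norm_num
    _ = ∑ j ∈ Finset.range (n+1),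
          t * ((fun k : ℕ => g y (x + t + k)) j - (fun k : ℕ => g y (x + t + k)) (j+1)) := by
        rw [← Finset.mul_sum, Finset.sum_range_sub']
    _ ≤ ∑ j ∈ Finset.range (n+1), (g y (x + j) - g y (x + t + j)) :=
        Finset.sum_le_sum hterm


lemma norm_shift (c y : ℝ) (hc : 0 < c) :
    ‖(c:ℂ) + y * Complex.I‖ = c * Real.exp (g y c / 2) := by
  rw [Complex.norm_add_mul_I]
  have he : Real.exp (g y c / 2) * Real.exp (g y c / 2) = Real.exp (g y c) := by
    rw [← Real.exp_add]; ring_nf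
  have h2 : c^2 + y^2 = (c * Real.exp (g y c / 2))^2 := by
    have hsq : (Real.exp (g y c / 2))^2 = Real.exp (g y c) := by rw [sq, he]
    rw [mul_pow, hsq, exp_g y hc]
    field_simp
  rw [h2, Real.sqrt_sq (by positivity)]

lemma GammaSeqR_pos (c : ℝ) (hc : 0 < c) {n : ℕ} (hn : n ≠ 0) :
    0 < Real.GammaSeq c n := by
  have hn' : (0:ℝ) < n := by
    exact_mod_cast Nat.pos_of_ne_zero hn
  rw [Real.GammaSeq]
  apply div_pos
  · apply mul_pos (Real.rpow_pos_of_pos hn' c)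
    exact_mod_cast Nat.factorial_pos n
  · apply Finset.prod_pos
    intro j _
    have : (0:ℝ) ≤ j := Nat.cast_nonneg j
    linarith

lemma norm_GammaSeq (c y : ℝ) (hc : 0 < c) {n : ℕ} (hn : n ≠ 0) :
    ‖Complex.GammaSeq ((c:ℂ) + y * Complex.I) n‖
      = Real.GammaSeq c n
        * Real.exp (-(∑ j ∈ Finset.range (n+1), g y (c + j))/2) := by
  have hn' : (0:ℝ) < n := by exact_mod_cast Nat.pos_of_ne_zero hn
  rw [Complex.GammaSeq, Real.GammaSeq, norm_div, norm_mul, norm_prod]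
  have h1 : ‖(n:ℂ) ^ ((c:ℂ) + y * Complex.I)‖ = (n:ℝ) ^ c := by
    rw [← Complex.ofReal_natCast,
      Complex.norm_cpow_eq_rpow_re_of_pos hn']
    congr 1
    simp
  have h3 : ∀ j ∈ Finset.range (n+1),
      ‖(c:ℂ) + y * Complex.I + (j:ℂ)‖ = (c + j) * Real.exp (g y (c + j) / 2) := by
    intro j _
    have hcj : (0:ℝ) < c + j := by
      have : (0:ℝ) ≤ j := Nat.cast_nonneg j
      linarith
    have e : (c:ℂ) + y * Complex.I + (j:ℂ) = ((c + j : ℝ):ℂ) + y * Complex.I := by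
      push_cast; ring
    rw [e, norm_shift _ _ hcj]
  rw [h1, Complex.norm_natCast, Finset.prod_congr rfl h3, Finset.prod_mul_distrib, ← Real.exp_sum]
  have hS : ∑ j ∈ Finset.range (n+1), g y (c + j) / 2
      = (∑ j ∈ Finset.range (n+1), g y (c + j))/2 := by
    rw [Finset.sum_div]
  rw [hS]
  have hprod : (0:ℝ) < ∏ j ∈ Finset.range (n+1), (c + (j:ℝ)) := by
    apply Finset.prod_pos
    intro j _
    have : (0:ℝ) ≤ j := Nat.cast_nonneg j
    linarith
  rw [neg_div, Real.exp_neg, ← div_div, div_eq_mul_inv]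

lemma norm_GammaSeq_ratio (t x y : ℝ) (ht : 0 ≤ t) (hx : 0 < x) {n : ℕ} (hn : n ≠ 0) :
    ‖Complex.GammaSeq ((x:ℂ) + y * Complex.I + (t:ℂ)) n
        / Complex.GammaSeq ((x:ℂ) + y * Complex.I) n‖
      = (Real.GammaSeq (x+t) n / Real.GammaSeq x n)
        * Real.exp ((∑ j ∈ Finset.range (n+1), (g y (x + j) - g y (x + t + j)))/2) := by
  have e : (x:ℂ) + y * Complex.I + (t:ℂ) = ((x + t : ℝ):ℂ) + y * Complex.I := by
    push_cast; ring
  rw [norm_div, e, norm_GammaSeq (x+t) y (by linarith) hn, norm_GammaSeq x y hx hn]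
  have hG2 : Real.GammaSeq x n ≠ 0 := (GammaSeqR_pos x hx hn).ne'
  have hsum : ∑ j ∈ Finset.range (n+1), (g y (x + j) - g y (x + t + j))
      = (∑ j ∈ Finset.range (n+1), g y (x + j))
        - ∑ j ∈ Finset.range (n+1), g y (x + t + j) := by
    rw [Finset.sum_sub_distrib]
  have hcong : ∀ j ∈ Finset.range (n+1), g y ((x+t) + (j:ℝ)) = g y (x + t + j) := by
    intro j _; ring_nf
  rw [Finset.sum_congr rfl hcong, hsum]
  rw [mul_div_mul_comm, ← Real.exp_sub]
  congr 1
  ring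

lemma GammaR_ratio_upper (t x : ℝ) (ht0 : 0 ≤ t) (ht1 : t ≤ 1) (hx : 1 ≤ x) :
    Real.Gamma (x + t) ≤ Real.Gamma x * x ^ t := by
  have hx0 : (0:ℝ) < x := by linarith
  have hΓx : 0 < Real.Gamma x := Real.Gamma_pos_of_pos hx0
  have hΓxt : 0 < Real.Gamma (x + t) := Real.Gamma_pos_of_pos (by linarith)
  have h := Real.convexOn_log_Gamma.2 (Set.mem_Ioi.2 hx0)
    (Set.mem_Ioi.2 (by linarith : (0:ℝ) < x + 1)) (by linarith : (0:ℝ) ≤ 1 - t) ht0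
    (by ring : (1 - t) + t = 1)
  simp only [smul_eq_mul, Function.comp_apply] at h
  have e : (1 - t) * x + t * (x + 1) = x + t := by ring
  rw [e] at h
  rw [Real.Gamma_add_one hx0.ne', Real.log_mul hx0.ne' hΓx.ne'] at h
  have hlog : Real.log (Real.Gamma (x + t)) ≤ Real.log (Real.Gamma x * x ^ t) := by
    rw [Real.log_mul hΓx.ne' (Real.rpow_pos_of_pos hx0 t).ne', Real.log_rpow hx0]
    linarith
  exact (Real.log_le_log_iff hΓxt (by positivity)).1 hlog

lemma GammaR_ratio_lower (t x : ℝ) (ht0 : 0 ≤ t) (ht1 : t ≤ 1) (hx : 1 ≤ x) :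
    Real.Gamma x * x ^ t ≤ 2 * Real.Gamma (x + t) := by
  have hx0 : (0:ℝ) < x := by linarith
  have hxt0 : (0:ℝ) < x + t := by linarith
  have hΓx : 0 < Real.Gamma x := Real.Gamma_pos_of_pos hx0
  have hΓxt : 0 < Real.Gamma (x + t) := Real.Gamma_pos_of_pos hxt0
  have h := Real.convexOn_log_Gamma.2 (Set.mem_Ioi.2 hxt0)
    (Set.mem_Ioi.2 (by linarith : (0:ℝ) < x + t + 1)) ht0 (by linarith : (0:ℝ) ≤ 1 - t)
    (by ring : t + (1 - t) = 1)
  simp only [smul_eq_mul, Function.comp_apply] at h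
  have e : t * (x + t) + (1 - t) * (x + t + 1) = x + 1 := by ring
  rw [e] at h
  rw [Real.Gamma_add_one hx0.ne', Real.Gamma_add_one hxt0.ne',
    Real.log_mul hx0.ne' hΓx.ne', Real.log_mul hxt0.ne' hΓxt.ne'] at h
  -- h : log x + log Γ x ≤ t * log Γ(x+t) + (1-t) * (log (x+t) + log Γ(x+t))
  have hlogxt : Real.log (x + t) ≤ Real.log 2 + Real.log x := by
    rw [← Real.log_mul (by norm_num) hx0.ne']
    exact Real.log_le_log hxt0 (by linarith)
  have hlogx : 0 ≤ Real.log x := Real.log_nonneg hx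
  have hlog2 : 0 ≤ Real.log 2 := Real.log_nonneg (by norm_num)
  have key : Real.log (Real.Gamma x) + t * Real.log x - Real.log 2
      ≤ Real.log (Real.Gamma (x + t)) := by nlinarith
  have hlog : Real.log (Real.Gamma x * x ^ t) ≤ Real.log (2 * Real.Gamma (x + t)) := by
    rw [Real.log_mul hΓx.ne' (Real.rpow_pos_of_pos hx0 t).ne', Real.log_rpow hx0,
      Real.log_mul (by norm_num) hΓxt.ne']
    linarith
  exact (Real.log_le_log_iff (by positivity) (by positivity)).1 hlog


lemma re_aux (x y : ℝ) : ((x:ℂ) + y * Complex.I).re = x := by simp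

lemma Gamma_ne_zero_aux (x y : ℝ) (hx : 0 < x) :
    Complex.Gamma ((x:ℂ) + y * Complex.I) ≠ 0 :=
  Complex.Gamma_ne_zero_of_re_pos (by rw [re_aux]; exact hx)

lemma tendsto_norm_ratio (t x y : ℝ) (hx : 0 < x) :
    Tendsto (fun n => ‖Complex.GammaSeq ((x:ℂ) + y * Complex.I + (t:ℂ)) n
        / Complex.GammaSeq ((x:ℂ) + y * Complex.I) n‖) atTop
      (𝓝 ‖Complex.Gamma ((x:ℂ) + y * Complex.I + (t:ℂ))
        / Complex.Gamma ((x:ℂ) + y * Complex.I)‖) :=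
  (((Complex.GammaSeq_tendsto_Gamma _).div (Complex.GammaSeq_tendsto_Gamma _)
    (Gamma_ne_zero_aux x y hx))).norm

lemma tendsto_GammaSeqR_ratio (t x : ℝ) (hx : 0 < x) :
    Tendsto (fun n => Real.GammaSeq (x+t) n / Real.GammaSeq x n) atTop
      (𝓝 (Real.Gamma (x+t) / Real.Gamma x)) :=
  (Real.GammaSeq_tendsto_Gamma _).div (Real.GammaSeq_tendsto_Gamma _)
    (Real.Gamma_pos_of_pos hx).ne'

lemma tendsto_g_tail (t x y : ℝ) (ht : 0 ≤ t) (hx : 1 ≤ x) :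
    Tendsto (fun n : ℕ => g y (x + t + ((n:ℝ)+1))) atTop (𝓝 0) := by
  have hpt : ∀ n : ℕ, g y (x + t + ((n:ℝ)+1)) = Real.log (1 + y^2/(x + t + ((n:ℝ)+1))^2) := by
    intro n
    have : (0:ℝ) < x + t + ((n:ℝ)+1) := by
      have : (0:ℝ) ≤ (n:ℝ) := Nat.cast_nonneg n
      linarith
    exact g_eq' y this
  have h1 : Tendsto (fun n : ℕ => x + t + ((n:ℝ)+1)) atTop atTop := by
    apply tendsto_atTop_add_const_left
    apply tendsto_atTop_add_const_right
    exact tendsto_natCast_atTop_atTop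
  have h2 : Tendsto (fun n : ℕ => (x + t + ((n:ℝ)+1))^2) atTop atTop :=
    h1.atTop_mul_atTop₀ h1 |>.congr (by intro n; rw [sq])
  have h3 : Tendsto (fun n : ℕ => y^2/(x + t + ((n:ℝ)+1))^2) atTop (𝓝 0) := by
    simpa [div_eq_mul_inv] using h2.inv_tendsto_atTop.const_mul (y^2)
  have h4 : Tendsto (fun n : ℕ => 1 + y^2/(x + t + ((n:ℝ)+1))^2) atTop (𝓝 1) := by
    simpa using h3.const_add 1
  have h5 := ((Real.continuousAt_log (one_ne_zero)).tendsto.comp h4)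
  rw [Real.log_one] at h5
  exact h5.congr (fun n => (hpt n).symm)

lemma core_upper (t x y : ℝ) (ht0 : 0 ≤ t) (ht1 : t ≤ 1) (hx : 1 ≤ x) :
    ‖Complex.Gamma ((x:ℂ) + y * Complex.I + (t:ℂ))
        / Complex.Gamma ((x:ℂ) + y * Complex.I)‖ ≤ 4 * (x^2+y^2) ^ (t/2) := by
  have hx0 : (0:ℝ) < x := by linarith
  have hb0 : (0:ℝ) < x^2 + y^2 := by positivity
  rcases eq_or_lt_of_le ht0 with h0 | htpos
  · rw [← h0]
    push_cast
    rw [add_zero, div_self (Gamma_ne_zero_aux x y hx0), norm_one]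
    rw [zero_div, Real.rpow_zero]
    norm_num
  -- limit argument
  have key : ‖Complex.Gamma ((x:ℂ) + y * Complex.I + (t:ℂ))
        / Complex.Gamma ((x:ℂ) + y * Complex.I)‖
      ≤ (Real.Gamma (x+t) / Real.Gamma x) * Real.exp (t * (2 * Real.log 4 + g y x)/2) := by
    apply le_of_tendsto_of_tendsto (tendsto_norm_ratio t x y hx0)
      ((tendsto_GammaSeqR_ratio t x hx0).mul_const _)
    filter_upwards [eventually_ne_atTop 0] with n hn
    rw [norm_GammaSeq_ratio t x y ht0 hx0 hn]
    have hBpos : 0 < Real.GammaSeq (x+t) n / Real.GammaSeq x n :=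
      div_pos (GammaSeqR_pos _ (by linarith) hn) (GammaSeqR_pos _ hx0 hn)
    apply mul_le_mul_of_nonneg_left _ hBpos.le
    apply Real.exp_le_exp.2
    linarith [sum_upper y t x htpos ht1 hx n]
  have hΓx : 0 < Real.Gamma x := Real.Gamma_pos_of_pos hx0
  have hxt : (0:ℝ) < x^t := Real.rpow_pos_of_pos hx0 t
  have hgam : Real.Gamma (x+t)/Real.Gamma x ≤ x^t := by
    rw [div_le_iff₀ hΓx]
    have := GammaR_ratio_upper t x ht0 ht1 hx
    linarith [mul_comm (Real.Gamma x) (x^t)]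
  have hexp : Real.exp (t * (2 * Real.log 4 + g y x)/2)
      = (4:ℝ)^t * ((x^2+y^2)/x^2)^(t/2) := by
    rw [g_eq y hx0, Real.rpow_def_of_pos (by norm_num : (0:ℝ) < 4),
      Real.rpow_def_of_pos (by positivity), ← Real.exp_add]
    congr 1; ring
  have hxpow : ((x^2):ℝ)^(t/2) = x^t := by
    rw [← Real.rpow_natCast x 2, ← Real.rpow_mul hx0.le]
    congr 1
    push_cast
    ring
  have hdiv : ((x^2+y^2)/x^2)^(t/2) = (x^2+y^2)^(t/2) / x^t := by
    rw [Real.div_rpow hb0.le (by positivity), hxpow]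
  have h4t : (4:ℝ)^t ≤ 4 := by
    calc (4:ℝ)^t ≤ (4:ℝ)^(1:ℝ) := Real.rpow_le_rpow_of_exponent_le (by norm_num) ht1
      _ = 4 := Real.rpow_one 4
  calc ‖Complex.Gamma ((x:ℂ) + y * Complex.I + (t:ℂ))
        / Complex.Gamma ((x:ℂ) + y * Complex.I)‖
      ≤ (Real.Gamma (x+t) / Real.Gamma x) * Real.exp (t * (2 * Real.log 4 + g y x)/2) := key
    _ ≤ x^t * ((4:ℝ)^t * ((x^2+y^2)^(t/2) / x^t)) := by
        rw [hexp, hdiv]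
        apply mul_le_mul_of_nonneg_right hgam (by positivity)
    _ = (4:ℝ)^t * (x^2+y^2)^(t/2) := by
        field_simp
    _ ≤ 4 * (x^2+y^2)^(t/2) := mul_le_mul_of_nonneg_right h4t (by positivity)

lemma core_lower (t x y : ℝ) (ht0 : 0 ≤ t) (ht1 : t ≤ 1) (hx : 1 ≤ x) :
    (1/4) * (x^2+y^2) ^ (t/2)
      ≤ ‖Complex.Gamma ((x:ℂ) + y * Complex.I + (t:ℂ))
          / Complex.Gamma ((x:ℂ) + y * Complex.I)‖ := by
  have hx0 : (0:ℝ) < x := by linarith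
  have hb0 : (0:ℝ) < x^2 + y^2 := by positivity
  rcases eq_or_lt_of_le ht0 with h0 | htpos
  · rw [← h0]
    push_cast
    rw [add_zero, div_self (Gamma_ne_zero_aux x y hx0), norm_one]
    rw [zero_div, Real.rpow_zero]
    norm_num
  have hxt0 : (0:ℝ) < x + t := by linarith
  -- limit argument
  have htail := tendsto_g_tail t x y ht0 hx
  have htend : Tendsto (fun n : ℕ => (Real.GammaSeq (x+t) n / Real.GammaSeq x n)
      * Real.exp (t * (g y (x+t) - g y (x + t + ((n:ℝ)+1)))/2)) atTop
      (𝓝 ((Real.Gamma (x+t) / Real.Gamma x) * Real.exp (t * g y (x+t)/2))) := by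
    apply (tendsto_GammaSeqR_ratio t x hx0).mul
    have h1 : Tendsto (fun n : ℕ => t * (g y (x+t) - g y (x + t + ((n:ℝ)+1)))/2) atTop
        (𝓝 (t * g y (x+t)/2)) := by
      have h2 : Tendsto (fun n : ℕ => g y (x+t) - g y (x + t + ((n:ℝ)+1))) atTop
          (𝓝 (g y (x+t) - 0)) := tendsto_const_nhds.sub htail
      rw [sub_zero] at h2
      exact (h2.const_mul t).div_const 2
    exact (Real.continuous_exp.tendsto _).comp h1
  have key : (Real.Gamma (x+t) / Real.Gamma x) * Real.exp (t * g y (x+t)/2)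
      ≤ ‖Complex.Gamma ((x:ℂ) + y * Complex.I + (t:ℂ))
          / Complex.Gamma ((x:ℂ) + y * Complex.I)‖ := by
    apply le_of_tendsto_of_tendsto htend (tendsto_norm_ratio t x y hx0)
    filter_upwards [eventually_ne_atTop 0] with n hn
    rw [norm_GammaSeq_ratio t x y ht0 hx0 hn]
    have hBpos : 0 < Real.GammaSeq (x+t) n / Real.GammaSeq x n :=
      div_pos (GammaSeqR_pos _ (by linarith) hn) (GammaSeqR_pos _ hx0 hn)
    apply mul_le_mul_of_nonneg_left _ hBpos.le
    apply Real.exp_le_exp.2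
    have hsl := sum_lower y t x htpos ht1 hx n
    have hc : ((n+1:ℕ):ℝ) = (n:ℝ)+1 := by push_cast; ring
    rw [hc] at hsl
    linarith
  have hΓx : 0 < Real.Gamma x := Real.Gamma_pos_of_pos hx0
  have hxt : (0:ℝ) < x^t := Real.rpow_pos_of_pos hx0 t
  have hP : (0:ℝ) < (x^2+y^2)^(t/2) := Real.rpow_pos_of_pos hb0 _
  have hgam : x^t/2 ≤ Real.Gamma (x+t)/Real.Gamma x := by
    rw [div_le_div_iff₀ (by norm_num) hΓx]
    have := GammaR_ratio_lower t x ht0 ht1 hx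
    nlinarith
  have hexp : Real.exp (t * g y (x+t)/2) = (((x+t)^2+y^2)/(x+t)^2)^(t/2) := by
    rw [g_eq y hxt0, Real.rpow_def_of_pos (by positivity)]
    congr 1; ring
  have h2x : ((4*x^2):ℝ)^(t/2) ≤ 2 * x^t := by
    have e1 : (4*x^2 : ℝ) = (2*x)^2 := by ring
    have e2 : ((2*x:ℝ)^2)^(t/2) = (2*x)^t := by
      rw [← Real.rpow_natCast (2*x) 2, ← Real.rpow_mul (by positivity : (0:ℝ) ≤ 2*x)]
      congr 1
      push_cast
      ring
    rw [e1, e2, Real.mul_rpow (by norm_num) hx0.le]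
    have h2t : (2:ℝ)^t ≤ 2 := by
      calc (2:ℝ)^t ≤ (2:ℝ)^(1:ℝ) := Real.rpow_le_rpow_of_exponent_le (by norm_num) ht1
        _ = 2 := Real.rpow_one 2
    exact mul_le_mul_of_nonneg_right h2t hxt.le
  have hmono : ((x^2+y^2)/(4*x^2))^(t/2) ≤ (((x+t)^2+y^2)/(x+t)^2)^(t/2) := by
    apply Real.rpow_le_rpow (by positivity) _ (by positivity)
    rw [div_le_div_iff₀ (by positivity) (by positivity)]
    have h4 : (x+t)^2 ≤ 4*x^2 := by nlinarith
    have hA : y^2*(x+t)^2 ≤ y^2*(4*x^2) := mul_le_mul_of_nonneg_left h4 (sq_nonneg y)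
    have hB : x^2*(x+t)^2 ≤ (4*x^2)*(x+t)^2 := by nlinarith [sq_nonneg (x+t), sq_nonneg x]
    nlinarith [hA, hB]
  have hE : (x^2+y^2)^(t/2)/(2*x^t) ≤ Real.exp (t * g y (x+t)/2) := by
    rw [hexp]
    calc (x^2+y^2)^(t/2)/(2*x^t) ≤ (x^2+y^2)^(t/2)/((4*x^2)^(t/2)) := by
          apply div_le_div_of_nonneg_left hP.le (Real.rpow_pos_of_pos (by positivity) _) h2x
      _ = ((x^2+y^2)/(4*x^2))^(t/2) := by
          rw [Real.div_rpow hb0.le (by positivity)]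
      _ ≤ (((x+t)^2+y^2)/(x+t)^2)^(t/2) := hmono
  calc (1/4) * (x^2+y^2)^(t/2)
      = (x^t/2) * ((x^2+y^2)^(t/2)/(2*x^t)) := by field_simp; ring
    _ ≤ (Real.Gamma (x+t)/Real.Gamma x) * Real.exp (t * g y (x+t)/2) := by
        apply mul_le_mul hgam hE (by positivity) (by positivity)
    _ ≤ _ := key


lemma norm_add_c_lower (c x y : ℝ) (hc : -1 < c) (hx : 1 ≤ x) :
    min 1 (1+c) * Real.sqrt (x^2+y^2) ≤ ‖(x:ℂ) + y * Complex.I + (c:ℂ)‖ := by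
  have e : (x:ℂ) + y * Complex.I + (c:ℂ) = ((x+c:ℝ):ℂ) + (y:ℝ) * Complex.I := by
    push_cast; ring
  rw [e, Complex.norm_add_mul_I]
  have hm : (0:ℝ) < min 1 (1+c) := lt_min (by norm_num) (by linarith)
  rw [← Real.sqrt_sq hm.le, ← Real.sqrt_mul (by positivity)]
  apply Real.sqrt_le_sqrt
  rcases le_or_gt 0 c with h | h
  · have : min 1 (1+c) = 1 := min_eq_left (by linarith)
    rw [this]
    nlinarith
  · have : min 1 (1+c) = 1+c := min_eq_right (by linarith)
    rw [this]
    have h1 : (1+c)*x ≤ x + c := by nlinarith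
    have h2 : 0 ≤ (1+c)*x := by nlinarith
    have h3 : ((1+c)*x)^2 ≤ (x+c)^2 := by nlinarith
    have h5 : (1+c)^2 ≤ 1 := by nlinarith
    have h4 : (1+c)^2*y^2 ≤ y^2 := by nlinarith [mul_le_mul_of_nonneg_right h5 (sq_nonneg y)]
    nlinarith
lemma norm_add_c_upper (c x y : ℝ) (hc : -1 < c) (hx : 1 ≤ x) :
    ‖(x:ℂ) + y * Complex.I + (c:ℂ)‖ ≤ max 1 (1+c) * Real.sqrt (x^2+y^2) := by
  have e : (x:ℂ) + y * Complex.I + (c:ℂ) = ((x+c:ℝ):ℂ) + (y:ℝ) * Complex.I := by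
    push_cast; ring
  rw [e, Complex.norm_add_mul_I]
  have hm : (0:ℝ) < max 1 (1+c) := lt_max_of_lt_left (by norm_num)
  rw [← Real.sqrt_sq hm.le, ← Real.sqrt_mul (by positivity)]
  apply Real.sqrt_le_sqrt
  rcases le_or_gt 0 c with h | h
  · have : max 1 (1+c) = 1+c := max_eq_right (by linarith)
    rw [this]
    have h0 : x + c ≤ (1+c)*x := by nlinarith
    have h1 : (x+c)^2 ≤ ((1+c)*x)^2 := pow_le_pow_left₀ (by linarith) h0 2
    have h5 : (1:ℝ) ≤ (1+c)^2 := by nlinarith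
    have h2 : y^2 ≤ (1+c)^2*y^2 := by nlinarith [mul_le_mul_of_nonneg_right h5 (sq_nonneg y)]
    nlinarith
  · have : max 1 (1+c) = 1 := max_eq_left (by linarith)
    rw [this]
    nlinarith

lemma sqrt_eq_rpow' (x y : ℝ) : Real.sqrt (x^2+y^2) = (x^2+y^2) ^ ((1:ℝ)/2) :=
  Real.rpow_natCast _ _ ▸ Real.sqrt_eq_rpow _

lemma shift_bound_aux : ∀ (n : ℕ) (γ : ℝ), -1 < γ → γ ≤ n →
    ∃ c C : ℝ, 0 < c ∧ 0 < C ∧ ∀ x y : ℝ, 1 ≤ x →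
      c * (x^2+y^2) ^ (γ/2)
          ≤ ‖Complex.Gamma ((x:ℂ) + y * Complex.I + (γ:ℂ))
              / Complex.Gamma ((x:ℂ) + y * Complex.I)‖
      ∧ ‖Complex.Gamma ((x:ℂ) + y * Complex.I + (γ:ℂ))
              / Complex.Gamma ((x:ℂ) + y * Complex.I)‖ ≤ C * (x^2+y^2) ^ (γ/2) := by
  intro n
  induction n with
  | zero =>
    intro γ hγ hγ0
    norm_num at hγ0
    refine ⟨(1+γ)/4, 4/(1+γ), by linarith, div_pos (by norm_num) (by linarith), ?_⟩
    intro x y hx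
    have hx0 : (0:ℝ) < x := by linarith
    have hb0 : (0:ℝ) < x^2+y^2 := by positivity
    have hsγ : (x:ℂ) + y * Complex.I + (γ:ℂ) ≠ 0 := by
      intro h
      have : ((x:ℂ) + y * Complex.I + (γ:ℂ)).re = 0 := by rw [h]; simp
      simp only [Complex.add_re, Complex.ofReal_re, Complex.mul_re, Complex.I_re,
        Complex.I_im, Complex.ofReal_im] at this
      nlinarith
    have hrec : Complex.Gamma ((x:ℂ) + y * Complex.I + ((γ+1:ℝ):ℂ))
        = ((x:ℂ) + y * Complex.I + (γ:ℂ))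
          * Complex.Gamma ((x:ℂ) + y * Complex.I + (γ:ℂ)) := by
      rw [show ((x:ℂ) + y * Complex.I + ((γ+1:ℝ):ℂ))
        = ((x:ℂ) + y * Complex.I + (γ:ℂ)) + 1 by push_cast; ring]
      exact Complex.Gamma_add_one _ hsγ
    have hup := core_upper (γ+1) x y (by linarith) (by linarith) hx
    have hlo := core_lower (γ+1) x y (by linarith) (by linarith) hx
    rw [hrec, mul_div_assoc, norm_mul] at hup hlo
    have hNlo := norm_add_c_lower γ x y hγ hx
    have hNup := norm_add_c_upper γ x y hγ hx
    rw [min_eq_right (by linarith : 1+γ ≤ 1)] at hNlo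
    rw [max_eq_left (by linarith : 1+γ ≤ 1), one_mul] at hNup
    have hsqpos : (0:ℝ) < Real.sqrt (x^2+y^2) := Real.sqrt_pos.2 hb0
    have hNpos : (0:ℝ) < ‖(x:ℂ) + y * Complex.I + (γ:ℂ)‖ := by
      rw [norm_pos_iff]; exact hsγ
    have hrpow : (x^2+y^2) ^ ((γ+1)/2)
        = (x^2+y^2) ^ (γ/2) * Real.sqrt (x^2+y^2) := by
      rw [sqrt_eq_rpow', ← Real.rpow_add hb0]
      congr 1; ring
    constructor
    · -- lower bound
      have h1 : (1/4) * ((x^2+y^2) ^ (γ/2) * Real.sqrt (x^2+y^2))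
          ≤ ‖(x:ℂ) + y * Complex.I + (γ:ℂ)‖
            * ‖Complex.Gamma ((x:ℂ) + y * Complex.I + (γ:ℂ))
                / Complex.Gamma ((x:ℂ) + y * Complex.I)‖ := by
        rw [← hrpow]; exact hlo
      have h2 : ‖(x:ℂ) + y * Complex.I + (γ:ℂ)‖
            * ‖Complex.Gamma ((x:ℂ) + y * Complex.I + (γ:ℂ))
                / Complex.Gamma ((x:ℂ) + y * Complex.I)‖
          ≤ Real.sqrt (x^2+y^2)
            * ‖Complex.Gamma ((x:ℂ) + y * Complex.I + (γ:ℂ))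
                / Complex.Gamma ((x:ℂ) + y * Complex.I)‖ :=
        mul_le_mul_of_nonneg_right hNup (norm_nonneg _)
      have h3 := le_trans h1 h2
      have h4 : (1/4) * (x^2+y^2) ^ (γ/2)
          ≤ ‖Complex.Gamma ((x:ℂ) + y * Complex.I + (γ:ℂ))
              / Complex.Gamma ((x:ℂ) + y * Complex.I)‖ := by
        have := (mul_le_mul_iff_of_pos_right hsqpos).1 (by linarith [h3] :
          (1/4) * (x^2+y^2) ^ (γ/2) * Real.sqrt (x^2+y^2)
            ≤ ‖Complex.Gamma ((x:ℂ) + y * Complex.I + (γ:ℂ))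
                / Complex.Gamma ((x:ℂ) + y * Complex.I)‖ * Real.sqrt (x^2+y^2))
        linarith
      have hle : (1+γ)/4 ≤ 1/4 := by linarith
      have hrp : (0:ℝ) ≤ (x^2+y^2) ^ (γ/2) := (Real.rpow_pos_of_pos hb0 _).le
      nlinarith [h4]
    · -- upper bound
      have h1 : ((1+γ) * Real.sqrt (x^2+y^2))
            * ‖Complex.Gamma ((x:ℂ) + y * Complex.I + (γ:ℂ))
                / Complex.Gamma ((x:ℂ) + y * Complex.I)‖
          ≤ 4 * ((x^2+y^2) ^ (γ/2) * Real.sqrt (x^2+y^2)) := by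
        rw [← hrpow]
        calc ((1+γ) * Real.sqrt (x^2+y^2))
            * ‖Complex.Gamma ((x:ℂ) + y * Complex.I + (γ:ℂ))
                / Complex.Gamma ((x:ℂ) + y * Complex.I)‖
            ≤ ‖(x:ℂ) + y * Complex.I + (γ:ℂ)‖
              * ‖Complex.Gamma ((x:ℂ) + y * Complex.I + (γ:ℂ))
                  / Complex.Gamma ((x:ℂ) + y * Complex.I)‖ :=
              mul_le_mul_of_nonneg_right hNlo (norm_nonneg _)
          _ ≤ 4 * (x^2+y^2) ^ ((γ+1)/2) := hup
      have hpos1γ : (0:ℝ) < 1+γ := by linarith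
      rw [div_mul_eq_mul_div, le_div_iff₀ hpos1γ]
      nlinarith [h1, hsqpos, Real.rpow_pos_of_pos hb0 (γ/2), norm_nonneg
        (Complex.Gamma ((x:ℂ) + y * Complex.I + (γ:ℂ))
          / Complex.Gamma ((x:ℂ) + y * Complex.I))]
  | succ n ih =>
    intro γ hγ hγn
    rcases le_or_gt γ n with h | h
    · exact ih γ hγ h
    -- n < γ ≤ n+1 : use recursion γ = (γ-1) + 1
    have hγ1 : (-1:ℝ) < γ - 1 := by
      have : (0:ℝ) ≤ n := Nat.cast_nonneg n
      linarith
    have hγ1n : γ - 1 ≤ n := by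
      push_cast at hγn ⊢
      linarith
    obtain ⟨c, C, hc, hC, hbound⟩ := ih (γ-1) hγ1 hγ1n
    have hnn : (0:ℝ) ≤ n := Nat.cast_nonneg n
    have hγpos : (0:ℝ) < γ := by linarith
    refine ⟨c * min 1 γ, C * max 1 γ, by positivity, by positivity, ?_⟩
    intro x y hx
    have hx0 : (0:ℝ) < x := by linarith
    have hb0 : (0:ℝ) < x^2+y^2 := by positivity
    obtain ⟨hblo, hbup⟩ := hbound x y hx
    have hsγ1 : (x:ℂ) + y * Complex.I + ((γ-1:ℝ):ℂ) ≠ 0 := by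
      intro hzero
      have : ((x:ℂ) + y * Complex.I + ((γ-1:ℝ):ℂ)).re = 0 := by rw [hzero]; simp
      simp only [Complex.add_re, Complex.ofReal_re, Complex.mul_re, Complex.I_re,
        Complex.I_im, Complex.ofReal_im] at this
      nlinarith
    have hrec : Complex.Gamma ((x:ℂ) + y * Complex.I + (γ:ℂ))
        = ((x:ℂ) + y * Complex.I + ((γ-1:ℝ):ℂ))
          * Complex.Gamma ((x:ℂ) + y * Complex.I + ((γ-1:ℝ):ℂ)) := by
      rw [show ((x:ℂ) + y * Complex.I + (γ:ℂ))
        = ((x:ℂ) + y * Complex.I + ((γ-1:ℝ):ℂ)) + 1 by push_cast; ring]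
      exact Complex.Gamma_add_one _ hsγ1
    have hNlo := norm_add_c_lower (γ-1) x y hγ1 hx
    have hNup := norm_add_c_upper (γ-1) x y hγ1 hx
    have hminmax1 : (1:ℝ) + (γ-1) = γ := by ring
    rw [hminmax1] at hNlo hNup
    have hsqpos : (0:ℝ) < Real.sqrt (x^2+y^2) := Real.sqrt_pos.2 hb0
    have hrpow : (x^2+y^2) ^ (γ/2)
        = (x^2+y^2) ^ ((γ-1)/2) * Real.sqrt (x^2+y^2) := by
      rw [sqrt_eq_rpow', ← Real.rpow_add hb0]
      congr 1; ring
    rw [hrec, mul_div_assoc, norm_mul]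
    have hBnn : (0:ℝ) ≤ ‖Complex.Gamma ((x:ℂ) + y * Complex.I + ((γ-1:ℝ):ℂ))
        / Complex.Gamma ((x:ℂ) + y * Complex.I)‖ := norm_nonneg _
    constructor
    · calc c * min 1 γ * (x^2+y^2) ^ (γ/2)
          = (min 1 γ * Real.sqrt (x^2+y^2)) * (c * (x^2+y^2) ^ ((γ-1)/2)) := by
            rw [hrpow]; ring
        _ ≤ ‖(x:ℂ) + y * Complex.I + ((γ-1:ℝ):ℂ)‖
            * ‖Complex.Gamma ((x:ℂ) + y * Complex.I + ((γ-1:ℝ):ℂ))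
                / Complex.Gamma ((x:ℂ) + y * Complex.I)‖ := by
            apply mul_le_mul hNlo hblo (by positivity) (norm_nonneg _)
    · calc ‖(x:ℂ) + y * Complex.I + ((γ-1:ℝ):ℂ)‖
            * ‖Complex.Gamma ((x:ℂ) + y * Complex.I + ((γ-1:ℝ):ℂ))
                / Complex.Gamma ((x:ℂ) + y * Complex.I)‖
          ≤ (max 1 γ * Real.sqrt (x^2+y^2)) * (C * (x^2+y^2) ^ ((γ-1)/2)) := by
            apply mul_le_mul hNup hbup hBnn (by positivity)
        _ = C * max 1 γ * (x^2+y^2) ^ (γ/2) := by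
            rw [hrpow]; ring


lemma Gamma_shift_ne_zero (c x y : ℝ) (hc : -1 < c) (hx : 1 ≤ x) :
    Complex.Gamma ((x:ℂ) + y * Complex.I + (c:ℂ)) ≠ 0 := by
  apply Complex.Gamma_ne_zero_of_re_pos
  simp only [Complex.add_re, Complex.ofReal_re, Complex.mul_re, Complex.I_re,
    Complex.I_im, Complex.ofReal_im]
  nlinarith

lemma pair_bound (α β : ℝ) (hα : -1 < α) (hβ : -1 < β) :
    ∃ C : ℝ, 0 < C ∧ ∀ x y : ℝ, 1 ≤ x →
      ‖Complex.Gamma ((x:ℂ) + y * Complex.I + (α:ℂ))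
          / Complex.Gamma ((x:ℂ) + y * Complex.I + (β:ℂ))‖
        ≤ C * (x^2+y^2) ^ ((α-β)/2) := by
  obtain ⟨nα, hnα⟩ := exists_nat_ge α
  obtain ⟨nβ, hnβ⟩ := exists_nat_ge β
  obtain ⟨cα, Cα, hcα, hCα, hα'⟩ := shift_bound_aux nα α hα hnα
  obtain ⟨cβ, Cβ, hcβ, hCβ, hβ'⟩ := shift_bound_aux nβ β hβ hnβ
  refine ⟨Cα / cβ, by positivity, ?_⟩
  intro x y hx
  have hx0 : (0:ℝ) < x := by linarith
  have hb0 : (0:ℝ) < x^2+y^2 := by positivity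
  have hGs : Complex.Gamma ((x:ℂ) + y * Complex.I) ≠ 0 := by
    apply Complex.Gamma_ne_zero_of_re_pos
    simp only [Complex.add_re, Complex.ofReal_re, Complex.mul_re, Complex.I_re,
      Complex.I_im, Complex.ofReal_im]
    nlinarith
  have hGβ := Gamma_shift_ne_zero β x y hβ hx
  obtain ⟨hαlo, hαup⟩ := hα' x y hx
  obtain ⟨hβlo, hβup⟩ := hβ' x y hx
  have heq : ‖Complex.Gamma ((x:ℂ) + y * Complex.I + (α:ℂ))
      / Complex.Gamma ((x:ℂ) + y * Complex.I + (β:ℂ))‖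
      = ‖Complex.Gamma ((x:ℂ) + y * Complex.I + (α:ℂ))
          / Complex.Gamma ((x:ℂ) + y * Complex.I)‖
        / ‖Complex.Gamma ((x:ℂ) + y * Complex.I + (β:ℂ))
          / Complex.Gamma ((x:ℂ) + y * Complex.I)‖ := by
    rw [norm_div, norm_div, norm_div]
    rw [div_div_div_cancel_right₀]
    exact norm_ne_zero_iff.2 hGs
  rw [heq]
  have hnum_nonneg : (0:ℝ) ≤ Cα * (x^2+y^2) ^ (α/2) := by positivity
  have hden_pos : (0:ℝ) < cβ * (x^2+y^2) ^ (β/2) := by positivity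
  have hd := div_le_div₀ hnum_nonneg hαup hden_pos hβlo
  apply le_trans hd
  rw [div_le_iff₀ (by positivity : (0:ℝ) < cβ * (x^2+y^2) ^ (β/2))]
  have hrw : (x^2+y^2) ^ ((α-β)/2) * ((x^2+y^2) ^ (β/2)) = (x^2+y^2) ^ (α/2) := by
    rw [← Real.rpow_add hb0]
    congr 1; ring
  have : Cα / cβ * (x^2+y^2) ^ ((α-β)/2) * (cβ * (x^2+y^2) ^ (β/2))
      = Cα * ((x^2+y^2) ^ ((α-β)/2) * (x^2+y^2) ^ (β/2)) := by
    field_simp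
  rw [this, hrw]

lemma prod_rpow_sum (b : ℝ) (hb : 0 < b) (s : Finset ℕ) (f : ℕ → ℝ) :
    ∏ i ∈ s, b ^ f i = b ^ (∑ i ∈ s, f i) := by
  classical
  induction s using Finset.induction_on with
  | empty => simp
  | @insert a s ha ih =>
    rw [Finset.prod_insert ha, Finset.sum_insert ha, ih, ← Real.rpow_add hb]

end GammaShiftAux

open GammaShiftAux

/-- Uniform-in-shift Gamma product estimate, case `S = ∑(a_i − b_i) > 0`:
`|∏ Γ(a_i+M+1+iλ)/Γ(b_i+M+1+iλ)| ≤ C (1+M)^S (1+λ²)^{S/2}`. -/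
theorem gamma_product_shift_bound_pos (N : ℕ) (hN : 1 ≤ N) (a b : ℕ → ℝ)
    (ha : ∀ i ∈ Icc 1 N, -1 < a i) (hb : ∀ i ∈ Icc 1 N, -1 < b i)
    (hS : 0 < ∑ i ∈ Icc 1 N, (a i - b i)) :
    ∃ C > 0, ∀ M : ℝ, 0 ≤ M → ∀ lam : ℝ,
      ‖∏ i ∈ Icc 1 N,
          Complex.Gamma ((a i : ℂ) + (M:ℂ) + 1 + Complex.I * lam) /
            Complex.Gamma ((b i : ℂ) + (M:ℂ) + 1 + Complex.I * lam)‖ ≤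
        C * (1 + M) ^ (∑ i ∈ Icc 1 N, (a i - b i)) *
          (1 + lam ^ 2) ^ ((∑ i ∈ Icc 1 N, (a i - b i)) / 2) := by
  classical
  have hchoice : ∀ i : ℕ, ∃ C : ℝ, 0 < C ∧ (i ∈ Icc 1 N → ∀ x y : ℝ, 1 ≤ x →
      ‖Complex.Gamma ((x:ℂ) + y * Complex.I + ((a i :ℝ):ℂ))
          / Complex.Gamma ((x:ℂ) + y * Complex.I + ((b i :ℝ):ℂ))‖
        ≤ C * (x^2+y^2) ^ ((a i - b i)/2)) := by
    intro i
    by_cases hi : i ∈ Icc 1 N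
    · obtain ⟨C, hC, hCb⟩ := pair_bound (a i) (b i) (ha i hi) (hb i hi)
      exact ⟨C, hC, fun _ => hCb⟩
    · exact ⟨1, one_pos, fun h => absurd h hi⟩
  choose C hCpos hCb using hchoice
  refine ⟨∏ i ∈ Icc 1 N, C i, Finset.prod_pos (fun i _ => hCpos i), ?_⟩
  intro M hM lam
  set S := ∑ i ∈ Icc 1 N, (a i - b i) with hSdef
  have hx : (1:ℝ) ≤ M + 1 := by linarith
  have hb0 : (0:ℝ) < (M+1)^2 + lam^2 := by positivity
  have hterm : ∀ i ∈ Icc 1 N,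
      ‖Complex.Gamma ((a i : ℂ) + (M:ℂ) + 1 + Complex.I * lam) /
          Complex.Gamma ((b i : ℂ) + (M:ℂ) + 1 + Complex.I * lam)‖
        ≤ C i * ((M+1)^2 + lam^2) ^ ((a i - b i)/2) := by
    intro i hi
    have e1 : (a i : ℂ) + (M:ℂ) + 1 + Complex.I * lam
        = ((M+1:ℝ):ℂ) + (lam:ℝ) * Complex.I + ((a i :ℝ):ℂ) := by push_cast; ring
    have e2 : (b i : ℂ) + (M:ℂ) + 1 + Complex.I * lam
        = ((M+1:ℝ):ℂ) + (lam:ℝ) * Complex.I + ((b i :ℝ):ℂ) := by push_cast; ring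
    rw [e1, e2]
    exact hCb i hi (M+1) lam hx
  calc ‖∏ i ∈ Icc 1 N,
        Complex.Gamma ((a i : ℂ) + (M:ℂ) + 1 + Complex.I * lam) /
          Complex.Gamma ((b i : ℂ) + (M:ℂ) + 1 + Complex.I * lam)‖
      = ∏ i ∈ Icc 1 N, ‖Complex.Gamma ((a i : ℂ) + (M:ℂ) + 1 + Complex.I * lam) /
          Complex.Gamma ((b i : ℂ) + (M:ℂ) + 1 + Complex.I * lam)‖ := norm_prod _ _
    _ ≤ ∏ i ∈ Icc 1 N, (C i * ((M+1)^2 + lam^2) ^ ((a i - b i)/2)) :=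
        Finset.prod_le_prod (fun i _ => norm_nonneg _) hterm
    _ = (∏ i ∈ Icc 1 N, C i) * ((M+1)^2 + lam^2) ^ (S/2) := by
        rw [Finset.prod_mul_distrib, prod_rpow_sum _ hb0, hSdef, Finset.sum_div]
    _ ≤ (∏ i ∈ Icc 1 N, C i) * ((1 + M) ^ S * (1 + lam ^ 2) ^ (S/2)) := by
        apply mul_le_mul_of_nonneg_left _ (Finset.prod_nonneg (fun i _ => (hCpos i).le))
        have hineq : (M+1)^2 + lam^2 ≤ (1+M)^2 * (1 + lam^2) := by
          have h1 : (1:ℝ) ≤ (1+M)^2 := by nlinarith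
          nlinarith [mul_le_mul_of_nonneg_left h1 (sq_nonneg lam)]
        calc ((M+1)^2 + lam^2) ^ (S/2)
            ≤ ((1+M)^2 * (1 + lam^2)) ^ (S/2) :=
              Real.rpow_le_rpow hb0.le hineq (by positivity)
          _ = ((1+M)^2) ^ (S/2) * (1 + lam^2) ^ (S/2) :=
              Real.mul_rpow (by positivity) (by positivity)
          _ = (1 + M) ^ S * (1 + lam ^ 2) ^ (S/2) := by
              congr 1
              rw [← Real.rpow_natCast (1+M) 2, ← Real.rpow_mul (by linarith : (0:ℝ) ≤ 1+M)]
              congr 1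
              push_cast
              ring
    _ = (∏ i ∈ Icc 1 N, C i) * (1 + M) ^ S * (1 + lam ^ 2) ^ (S/2) := by ring
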